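/- Let n be a positive integer divisible by 8 and 1 ≤ k_1 ≤ n/2. Let A ∈ M_{(k_1−1)×(n−k_1)}(Z) be a matrix with all entries 0 or 1 such that the binary code C_1 of length n generated by the rows of the block matrix with first row [1 | 𝟏 | 𝟏] and remaining rows [0 | I_{k_1−1} | A] is doubly even of dimension k_1 (in particular I_{k_1−1} + AA^t ≡ 0 (mod 2) and 𝟏 + 𝟏A^t ≡ 0 (mod 4)). Then the all-ones vector 𝟏 ∈ (Z_2)^{n−k_1} does not belong to the row space of A over Z_2. -/

import Mathlib

open scoped BigOperators

set_option maxHeartbeats 1000000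

namespace Paper

/-- Self-orthogonality of a set of vectors w.r.t. the standard inner product. -/
def sorth {m : ℕ} {ι : Type} [Fintype ι] (S : Set (ι → ZMod m)) : Prop :=
  ∀ x ∈ S, ∀ y ∈ S, ∑ i, x i * y i = 0

/-- The dual (as a set) of a set of vectors w.r.t. the standard inner product. -/
def dualSet {m : ℕ} {ι : Type} [Fintype ι] (S : Set (ι → ZMod m)) : Set (ι → ZMod m) :=
  {x | ∀ y ∈ S, ∑ i, x i * y i = 0}

/-- A set of vectors is doubly even if every element has Hamming weight divisible by 4. -/
def doublyEven {m : ℕ} {ι : Type} [Fintype ι] (S : Set (ι → ZMod m)) : Prop :=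
  ∀ x ∈ S, 4 ∣ (Finset.univ.filter fun i => x i ≠ 0).card

/-- Coordinatewise reduction map `(Z_{p^2})^ι → (Z_p)^ι`. -/
def res (p : ℕ) [Fact p.Prime] {ι : Type} (v : ι → ZMod (p ^ 2)) : ι → ZMod p :=
  fun i => ZMod.castHom (dvd_pow_self p (by norm_num)) (ZMod p) (v i)

/-- The injection `(Z_p)^ι → (Z_{p^2})^ι` induced by `Z_p ≅ pZ_{p^2} ⊆ Z_{p^2}`. -/
def iot (p : ℕ) {ι : Type} (v : ι → ZMod p) : ι → ZMod (p ^ 2) :=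
  fun i => (p : ZMod (p ^ 2)) * (ZMod.cast (v i))

/-- Coordinatewise reduction map `(Z_4)^ι → (Z_2)^ι`. -/
def res4 {ι : Type} (v : ι → ZMod 4) : ι → ZMod 2 :=
  fun i => ZMod.castHom (by norm_num : (2:ℕ) ∣ 4) (ZMod 2) (v i)

/-- The injection `(Z_2)^ι → (Z_4)^ι`. -/
def iot4 {ι : Type} (v : ι → ZMod 2) : ι → ZMod 4 :=
  fun i => (2 : ZMod 4) * (ZMod.cast (v i))

/-- Euclidean weight on `Z_4`. -/
def ewt (x : ZMod 4) : ℕ := if x = 0 then 0 else if x = 2 then 4 else 1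

/-- A quaternary code is even if every codeword has Euclidean weight divisible by 8. -/
def evenCode {ι : Type} [Fintype ι] (S : Set (ι → ZMod 4)) : Prop :=
  ∀ x ∈ S, 8 ∣ ∑ i, ewt (x i)

/-- The code over `Z_q` generated by the rows of an integer matrix. -/
def intRowSpan (q : ℕ) {κ ι : Type} (G : Matrix κ ι ℤ) :
    Submodule (ZMod q) (ι → ZMod q) :=
  Submodule.span (ZMod q) (Set.range fun i => fun c => ((G i c : ℤ) : ZMod q))

/-- The Gaussian binomial coefficient `[n choose k]_p`. -/
def gauss (p n k : ℕ) : ℚ :=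
  ∏ i ∈ Finset.range k, ((p : ℚ) ^ n - (p : ℚ) ^ i) / ((p : ℚ) ^ k - (p : ℚ) ^ i)

/-- The integer generator matrix `[[1, 𝟏, 𝟏], [0, I, M]]`. -/
def genE (k r : ℕ) (M : Matrix (Fin k) (Fin r) ℤ) :
    Matrix (Unit ⊕ Fin k) (Unit ⊕ (Fin k ⊕ Fin r)) ℤ :=
  Matrix.fromBlocks (1 : Matrix Unit Unit ℤ) (Matrix.of fun _ _ => 1)
    (0 : Matrix (Fin k) Unit ℤ)
    (Matrix.fromCols (1 : Matrix (Fin k) (Fin k) ℤ) M)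

/-- if the binary code generated by `[[1, 𝟏, 𝟏], [0, I, A]]` is doubly even of
dimension `k₁` (where `8 ∣ n`, `1 ≤ k₁ ≤ n/2`, and `A` has `0,1` entries), then the all-ones
vector does not belong to the row space of `A` over `Z₂`. -/
theorem stmt9 (n k1 : ℕ) (hn8 : 8 ∣ n) (hn : 0 < n) (hk1 : 1 ≤ k1) (hk : k1 ≤ n / 2)
    (A : Matrix (Fin (k1 - 1)) (Fin (n - k1)) ℤ)
    (hA01 : ∀ i j, A i j = 0 ∨ A i j = 1)
    (hde : doublyEven ((intRowSpan 2 (genE (k1 - 1) (n - k1) A) :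
      Submodule (ZMod 2) ((Unit ⊕ (Fin (k1 - 1) ⊕ Fin (n - k1))) → ZMod 2)) :
      Set ((Unit ⊕ (Fin (k1 - 1) ⊕ Fin (n - k1))) → ZMod 2)))
    (hdim : Module.finrank (ZMod 2) (intRowSpan 2 (genE (k1 - 1) (n - k1) A) :
      Submodule (ZMod 2) ((Unit ⊕ (Fin (k1 - 1) ⊕ Fin (n - k1))) → ZMod 2)) = k1)
    (h2 : ∀ i j, (2 : ℤ) ∣ ((1 + A * A.transpose : Matrix (Fin (k1 - 1)) (Fin (k1 - 1)) ℤ) i j))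
    (h14 : ∀ i, (4 : ℤ) ∣ (1 + ∑ j, A i j)) :
    (fun _ => (1 : ZMod 2)) ∉ Submodule.span (ZMod 2)
      (Set.range fun i => fun j : Fin (n - k1) => ((A i j : ℤ) : ZMod 2)) := by
  intro hmem
  rw [Submodule.mem_span_range_iff_exists_fun] at hmem
  obtain ⟨c, hc⟩ := hmem
  have hc' : ∀ j, ∑ i, c i * ((A i j : ℤ) : ZMod 2) = 1 := by
    intro j
    have := congrFun hc j
    simpa [smul_eq_mul] using this
  -- each row sum is 1 in ZMod 2
  have hrow : ∀ i, ∑ j, ((A i j : ℤ) : ZMod 2) = 1 := by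
    intro i
    obtain ⟨m, hm⟩ := h14 i
    have h0 : ((1 + ∑ j, A i j : ℤ) : ZMod 2) = 0 := by
      rw [hm]; push_cast
      have h4 : (4 : ZMod 2) = 0 := by decide
      rw [h4]; ring
    push_cast at h0
    have := add_eq_zero_iff_neg_eq.mp h0
    rw [← this]; decide
  -- orthonormality of rows mod 2
  have horth : ∀ i i', ∑ j, ((A i j : ℤ) : ZMod 2) * ((A i' j : ℤ) : ZMod 2)
      = if i = i' then 1 else 0 := by
    intro i i'
    obtain ⟨m, hm⟩ := h2 i i'
    have hexp : ((1 + A * A.transpose : Matrix _ _ ℤ) i i')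
        = (if i = i' then 1 else 0) + ∑ j, A i j * A i' j := by
      simp [Matrix.add_apply, Matrix.mul_apply, Matrix.one_apply, Matrix.transpose_apply]
    rw [hexp] at hm
    have h0 : (((if i = i' then 1 else 0) + ∑ j, A i j * A i' j : ℤ) : ZMod 2) = 0 := by
      rw [hm]; push_cast
      have h2' : (2 : ZMod 2) = 0 := by decide
      rw [h2']; ring
    push_cast at h0
    have := add_eq_zero_iff_neg_eq.mp h0
    rw [← this]
    by_cases h : i = i' <;> simp [h] <;> decide
  -- all coefficients c i are 1
  have hcone : ∀ i0, c i0 = 1 := by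
    intro i0
    have key : ∑ j, (∑ i, c i * ((A i j : ℤ) : ZMod 2)) * ((A i0 j : ℤ) : ZMod 2)
        = ∑ j, ((A i0 j : ℤ) : ZMod 2) := by
      refine Finset.sum_congr rfl fun j _ => by rw [hc' j, one_mul]
    rw [hrow i0] at key
    have key2 : ∑ j, (∑ i, c i * ((A i j : ℤ) : ZMod 2)) * ((A i0 j : ℤ) : ZMod 2)
        = c i0 := by
      calc ∑ j, (∑ i, c i * ((A i j : ℤ) : ZMod 2)) * ((A i0 j : ℤ) : ZMod 2)
          = ∑ j, ∑ i, c i * (((A i j : ℤ) : ZMod 2) * ((A i0 j : ℤ) : ZMod 2)) := by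
            refine Finset.sum_congr rfl fun j _ => ?_
            rw [Finset.sum_mul]
            exact Finset.sum_congr rfl fun i _ => by ring
        _ = ∑ i, ∑ j, c i * (((A i j : ℤ) : ZMod 2) * ((A i0 j : ℤ) : ZMod 2)) :=
            Finset.sum_comm
        _ = ∑ i, c i * ∑ j, ((A i j : ℤ) : ZMod 2) * ((A i0 j : ℤ) : ZMod 2) := by
            exact Finset.sum_congr rfl fun i _ => (Finset.mul_sum _ _ _).symm
        _ = ∑ i, c i * (if i = i0 then 1 else 0) := by
            refine Finset.sum_congr rfl fun i _ => by rw [horth]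
        _ = c i0 := by simp
    rw [key2] at key
    exact key
  -- each column sum is 1
  have hcol : ∀ j, ∑ i, ((A i j : ℤ) : ZMod 2) = 1 := by
    intro j
    have := hc' j
    simpa [hcone] using this
  -- double counting
  have hdc : ((n - k1 : ℕ) : ZMod 2) = ((k1 - 1 : ℕ) : ZMod 2) := by
    have h1 : ∑ j : Fin (n - k1), ∑ i, ((A i j : ℤ) : ZMod 2) = ((n - k1 : ℕ) : ZMod 2) := by
      simp [hcol]
    have h2' : ∑ j : Fin (n - k1), ∑ i, ((A i j : ℤ) : ZMod 2) = ((k1 - 1 : ℕ) : ZMod 2) := by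
      rw [Finset.sum_comm]; simp [hrow]
    rw [← h1, h2']
  have hzero : (((n - k1) + (k1 - 1) : ℕ) : ZMod 2) = 0 := by
    push_cast
    rw [hdc]
    ring_nf
    rw [show ((k1 - 1 : ℕ) : ZMod 2) * 2 = ((k1 - 1 : ℕ) : ZMod 2) * 2 from rfl]
    have : (2 : ZMod 2) = 0 := by decide
    rw [this, mul_zero]
  have hdvd : 2 ∣ ((n - k1) + (k1 - 1)) := by
    exact (ZMod.natCast_eq_zero_iff _ 2).mp hzero
  omega

end Paper
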